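/- In a Lie algebra 𝔤 with subspace decomposition 𝔤 = 𝔭₁ ⊕ ... ⊕ 𝔭₅ satisfying [𝔭₃,𝔭₅] ⊆ 𝔭₄, [𝔭₄,𝔭₅] ⊆ 𝔭₃, [𝔭₃,𝔭₄] ⊆ 𝔭₃ ⊕ 𝔭₅ with [𝔭₃,𝔭₅] ≠ 0, [𝔭₄,𝔭₅] ≠ 0, and [𝔭₃,𝔭₄] ⊄ 𝔭₃: there is no subalgebra 𝔨 ⊆ 𝔤 and decomposition 𝔪ᵢ ⊆ 𝔭ᵢ (complements of 𝔨∩𝔭ᵢ in 𝔭ᵢ) with 𝔨 ∩ 𝔭ᵢ = 0 for at least two indices i, j ∈ {3,4,5}, such that for all such pairs i ≠ j one has either [𝔪ᵢ,𝔪ⱼ] ⊆ 𝔪ᵢ or [𝔪ᵢ,𝔪ⱼ] ⊆ 𝔪ⱼ. (This is the contradiction in case 3 of the proof that the 5-parameter metrics on G₂ with pairwise distinct parameters are not geodesic orbit.) -/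

import Mathlib

private lemma swap_lie {g : Type*} [LieRing g] [LieAlgebra ℝ g]
    {p q r : Submodule ℝ g} (h : ∀ x ∈ p, ∀ y ∈ q, ⁅x, y⁆ ∈ r) :
    ∀ x ∈ q, ∀ y ∈ p, ⁅x, y⁆ ∈ r := by
  intro x hx y hy
  rw [← lie_skew]
  exact r.neg_mem (h y hy x hx)

/-- contradiction in case 3 of Proposition 4.4: in a Lie algebra
𝔤 = 𝔭₁ ⊕ … ⊕ 𝔭₅ with [𝔭₃,𝔭₅] ⊆ 𝔭₄, [𝔭₄,𝔭₅] ⊆ 𝔭₃, [𝔭₃,𝔭₄] ⊆ 𝔭₃ ⊕ 𝔭₅,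
[𝔭₃,𝔭₅] ≠ 0, [𝔭₄,𝔭₅] ≠ 0 and [𝔭₃,𝔭₄] ⊄ 𝔭₃, there is no subalgebra 𝔨 and set of
at least two indices among {3,4,5} with 𝔨 ∩ 𝔭ᵢ = 0 (so 𝔪ᵢ = 𝔭ᵢ) such that for all
pairs of such indices [𝔪ᵢ,𝔪ⱼ] ⊆ 𝔪ᵢ or [𝔪ᵢ,𝔪ⱼ] ⊆ 𝔪ⱼ. -/
theorem stmt18 {g : Type*} [LieRing g] [LieAlgebra ℝ g]
    (p₁ p₂ p₃ p₄ p₅ : Submodule ℝ g)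
    (hind : iSupIndep ![p₁, p₂, p₃, p₄, p₅])
    (hsup : p₁ ⊔ p₂ ⊔ p₃ ⊔ p₄ ⊔ p₅ = ⊤)
    (h35 : ∀ x ∈ p₃, ∀ y ∈ p₅, ⁅x, y⁆ ∈ p₄)
    (h45 : ∀ x ∈ p₄, ∀ y ∈ p₅, ⁅x, y⁆ ∈ p₃)
    (h34 : ∀ x ∈ p₃, ∀ y ∈ p₄, ⁅x, y⁆ ∈ p₃ ⊔ p₅)
    (h35ne : ∃ x ∈ p₃, ∃ y ∈ p₅, ⁅x, y⁆ ≠ 0)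
    (h45ne : ∃ x ∈ p₄, ∃ y ∈ p₅, ⁅x, y⁆ ≠ 0)
    (h34ns : ¬ ∀ x ∈ p₃, ∀ y ∈ p₄, ⁅x, y⁆ ∈ p₃) :
    ¬ ∃ (k : LieSubalgebra ℝ g) (S : Set (Fin 3)),
      (∃ i ∈ S, ∃ j ∈ S, i ≠ j) ∧
      (∀ i ∈ S, k.toSubmodule ⊓ (![p₃, p₄, p₅] i) = ⊥) ∧
      (∀ i ∈ S, ∀ j ∈ S, i ≠ j →
        ((∀ x ∈ ![p₃, p₄, p₅] i, ∀ y ∈ ![p₃, p₄, p₅] j, ⁅x, y⁆ ∈ ![p₃, p₄, p₅] i) ∨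
         (∀ x ∈ ![p₃, p₄, p₅] i, ∀ y ∈ ![p₃, p₄, p₅] j, ⁅x, y⁆ ∈ ![p₃, p₄, p₅] j))) := by
  rintro ⟨k, S, ⟨i, hi, j, hj, hij⟩, hk, hbr⟩
  have d34 : Disjoint p₃ p₄ := by
    simpa [Function.onFun] using hind.pairwiseDisjoint (show (2:Fin 5) ≠ 3 by decide)
  have d35 : Disjoint p₃ p₅ := by
    simpa [Function.onFun] using hind.pairwiseDisjoint (show (2:Fin 5) ≠ 4 by decide)
  have d45 : Disjoint p₄ p₅ := by
    simpa [Function.onFun] using hind.pairwiseDisjoint (show (3:Fin 5) ≠ 4 by decide)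
  have h3le : p₃ ≤ ⨆ j₀ ≠ (3:Fin 5), ![p₁,p₂,p₃,p₄,p₅] j₀ := by
    have := le_iSup₂ (f := fun (j₀:Fin 5) (_ : j₀ ≠ 3) => ![p₁,p₂,p₃,p₄,p₅] j₀) 2 (by decide)
    simpa using this
  have h5le : p₅ ≤ ⨆ j₀ ≠ (3:Fin 5), ![p₁,p₂,p₃,p₄,p₅] j₀ := by
    have := le_iSup₂ (f := fun (j₀:Fin 5) (_ : j₀ ≠ 3) => ![p₁,p₂,p₃,p₄,p₅] j₀) 4 (by decide)
    simpa using this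
  have dmix : Disjoint p₄ (p₃ ⊔ p₅) := by
    have := (hind 3).mono_right (sup_le h3le h5le)
    simpa using this
  have K35 : ¬ ((∀ x ∈ p₃, ∀ y ∈ p₅, ⁅x, y⁆ ∈ p₃) ∨ (∀ x ∈ p₃, ∀ y ∈ p₅, ⁅x, y⁆ ∈ p₅)) := by
    obtain ⟨x, hx, y, hy, hne⟩ := h35ne
    rintro (h | h)
    · exact hne (Submodule.disjoint_def.mp d34 _ (h x hx y hy) (h35 x hx y hy))
    · exact hne (Submodule.disjoint_def.mp d45 _ (h35 x hx y hy) (h x hx y hy))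
  have K45 : ¬ ((∀ x ∈ p₄, ∀ y ∈ p₅, ⁅x, y⁆ ∈ p₄) ∨ (∀ x ∈ p₄, ∀ y ∈ p₅, ⁅x, y⁆ ∈ p₅)) := by
    obtain ⟨x, hx, y, hy, hne⟩ := h45ne
    rintro (h | h)
    · exact hne (Submodule.disjoint_def.mp d34 _ (h45 x hx y hy) (h x hx y hy))
    · exact hne (Submodule.disjoint_def.mp d35 _ (h45 x hx y hy) (h x hx y hy))
  have K34 : ¬ ((∀ x ∈ p₃, ∀ y ∈ p₄, ⁅x, y⁆ ∈ p₃) ∨ (∀ x ∈ p₃, ∀ y ∈ p₄, ⁅x, y⁆ ∈ p₄)) := by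
    rintro (h | h)
    · exact h34ns h
    · push_neg at h34ns
      obtain ⟨x, hx, y, hy, hz⟩ := h34ns
      exact hz (by
        have h0 := Submodule.disjoint_def.mp dmix _ (h x hx y hy) (h34 x hx y hy)
        rw [h0]; exact p₃.zero_mem)
  have hp := hbr i hi j hj hij
  fin_cases i <;> fin_cases j <;>
    simp only [Matrix.cons_val_zero, Matrix.cons_val_one, Matrix.head_cons,
      Matrix.cons_val_two, Matrix.tail_cons, Fin.mk_zero, Fin.mk_one] at hp hij
  · exact hij rfl
  · exact K34 hp
  · exact K35 hp
  · exact hp.elim (fun h => K34 (Or.inr (swap_lie h))) (fun h => K34 (Or.inl (swap_lie h)))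
  · exact hij rfl
  · exact K45 hp
  · exact hp.elim (fun h => K35 (Or.inr (swap_lie h))) (fun h => K35 (Or.inl (swap_lie h)))
  · exact hp.elim (fun h => K45 (Or.inr (swap_lie h))) (fun h => K45 (Or.inl (swap_lie h)))
  · exact hij rfl
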